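/- Simple cycles and connecting forests: Let G be a connected graph and let l = (i, j) and ℓ̂ = (î, ĵ) be two distinct edges of G. Then there exists a simple cycle of G containing both l and ℓ̂ if and only if at least one of the forest families T({i, î}, {j, ĵ}) and T({i, ĵ}, {j, î}) is nonempty. -/

import Mathlib

open Matrix Finset

variable {n m : ℕ}

/-- Nodes `a` and `b` are joined by some edge in the edge set `S`. -/
def edgeAdj (src tgt : Fin m → Fin (n + 1)) (S : Finset (Fin m)) (a b : Fin (n + 1)) : Prop :=
  ∃ e ∈ S, (src e = a ∧ tgt e = b) ∨ (src e = b ∧ tgt e = a)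

/-- The spanning subgraph with edge set `S` is connected. -/
def ConnectedOn (src tgt : Fin m → Fin (n + 1)) (S : Finset (Fin m)) : Prop :=
  ∀ a b : Fin (n + 1), Relation.ReflTransGen (edgeAdj src tgt S) a b

/-- `F` is the edge set of a spanning tree of the graph on `n + 1` nodes
(a connected spanning subgraph with exactly `n` edges). -/
def IsSpanningTree (src tgt : Fin m → Fin (n + 1)) (F : Finset (Fin m)) : Prop :=
  F.card = n ∧ ConnectedOn src tgt F

/-- Connectivity within the vertex set `V`, using only edges of `S` traversed inside `V`. -/
def ConnWithin (src tgt : Fin m → Fin (n + 1)) (S : Finset (Fin m))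
    (V : Finset (Fin (n + 1))) : Prop :=
  ∀ a ∈ V, ∀ b ∈ V,
    Relation.ReflTransGen (fun x y => x ∈ V ∧ y ∈ V ∧ edgeAdj src tgt S x y) a b

/-- `F` is a spanning forest of exactly two vertex-disjoint trees, one containing all
nodes in `N1` and the other containing all nodes in `N2`. -/
def IsSpanningForest2 (src tgt : Fin m → Fin (n + 1)) (F : Finset (Fin m))
    (N1 N2 : Finset (Fin (n + 1))) : Prop :=
  ∃ V1 V2 : Finset (Fin (n + 1)),
    Disjoint V1 V2 ∧ V1 ∪ V2 = Finset.univ ∧ V1.Nonempty ∧ V2.Nonempty ∧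
      N1 ⊆ V1 ∧ N2 ⊆ V2 ∧ F.card + 1 = n ∧
      (∀ e ∈ F, (src e ∈ V1 ∧ tgt e ∈ V1) ∨ (src e ∈ V2 ∧ tgt e ∈ V2)) ∧
      ConnWithin src tgt F V1 ∧ ConnWithin src tgt F V2

/-- The (signed) incidence matrix `C`. -/
def incMat (src tgt : Fin m → Fin (n + 1)) : Matrix (Fin (n + 1)) (Fin m) ℝ :=
  Matrix.of fun i e => if src e = i then 1 else if tgt e = i then -1 else 0

/-- The weighted Laplacian `L = C ⬝ diag B ⬝ Cᵀ`. -/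
noncomputable def lap (src tgt : Fin m → Fin (n + 1)) (B : Fin m → ℝ) :
    Matrix (Fin (n + 1)) (Fin (n + 1)) ℝ :=
  incMat src tgt * Matrix.diagonal B * (incMat src tgt)ᵀ

/-- The reduced Laplacian: delete the row and column of the reference node `Fin.last n`. -/
noncomputable def rlap (src tgt : Fin m → Fin (n + 1)) (B : Fin m → ℝ) :
    Matrix (Fin n) (Fin n) ℝ :=
  (lap src tgt B).submatrix Fin.castSucc Fin.castSucc

/-- The inverse of the reduced Laplacian, padded with a zero row and column at the
reference node. -/
noncomputable def Amat (src tgt : Fin m → Fin (n + 1)) (B : Fin m → ℝ) :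
    Matrix (Fin (n + 1)) (Fin (n + 1)) ℝ :=
  Matrix.of fun i j =>
    if hi : i = Fin.last n then 0
    else if hj : j = Fin.last n then 0
    else (rlap src tgt B)⁻¹ (i.castPred hi) (j.castPred hj)

open Classical in
/-- `Σ_{F ∈ T_E} β(F)`: total weight of all spanning trees. -/
noncomputable def treeSum (src tgt : Fin m → Fin (n + 1)) (B : Fin m → ℝ) : ℝ :=
  ∑ F ∈ Finset.univ.filter (fun F => IsSpanningTree src tgt F), ∏ e ∈ F, B e

open Classical in
/-- `Σ_{F ∈ T_{−l}} β(F)`: total weight of all spanning trees avoiding the edge `l`. -/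
noncomputable def treeSumAvoiding (src tgt : Fin m → Fin (n + 1)) (B : Fin m → ℝ)
    (l : Fin m) : ℝ :=
  ∑ F ∈ Finset.univ.filter (fun F => IsSpanningTree src tgt F ∧ l ∉ F), ∏ e ∈ F, B e

open Classical in
/-- `Σ_{F ∈ T(N1, N2)} β(F)`: total weight of two-tree spanning forests separating
`N1` from `N2`. -/
noncomputable def forestSum (src tgt : Fin m → Fin (n + 1)) (B : Fin m → ℝ)
    (N1 N2 : Finset (Fin (n + 1))) : ℝ :=
  ∑ F ∈ Finset.univ.filter (fun F => IsSpanningForest2 src tgt F N1 N2), ∏ e ∈ F, B e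

/-- The power transfer distribution factor `D_{l, î ĵ}`. -/
noncomputable def ptdf (src tgt : Fin m → Fin (n + 1)) (B : Fin m → ℝ) (l : Fin m)
    (ihat jhat : Fin (n + 1)) : ℝ :=
  B l * (Amat src tgt B (src l) ihat + Amat src tgt B (tgt l) jhat
    - Amat src tgt B (src l) jhat - Amat src tgt B (tgt l) ihat)

/-- An edge is a bridge if its removal disconnects the graph. -/
def IsBridge (src tgt : Fin m → Fin (n + 1)) (l : Fin m) : Prop :=
  ¬ ConnectedOn src tgt (Finset.univ.erase l)

/-- There is a simple cycle (distinct edges, distinct vertices) containing both edges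
`l` and `lhat`. -/
def ExistsSimpleCycleThrough (src tgt : Fin m → Fin (n + 1)) (l lhat : Fin m) : Prop :=
  ∃ (k : ℕ) (es : Fin (k + 2) → Fin m) (vs : Fin (k + 2) → Fin (n + 1)),
    Function.Injective es ∧ Function.Injective vs ∧
      (∀ t, (src (es t) = vs t ∧ tgt (es t) = vs (t + 1)) ∨
        (src (es t) = vs (t + 1) ∧ tgt (es t) = vs t)) ∧
      (∃ t, es t = l) ∧ (∃ t, es t = lhat)

/-- The incidence submatrix `C_{−F}` on the surviving edges. -/
def Cminus (src tgt : Fin m → Fin (n + 1)) (F : Finset (Fin m)) :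
    Matrix (Fin (n + 1)) {e : Fin m // e ∉ F} ℝ :=
  (incMat src tgt).submatrix id (fun e => e.val)

/-- The incidence submatrix `C_F` on the removed edges. -/
def Cof (src tgt : Fin m → Fin (n + 1)) (F : Finset (Fin m)) :
    Matrix (Fin (n + 1)) {e : Fin m // e ∈ F} ℝ :=
  (incMat src tgt).submatrix id (fun e => e.val)

/-- The diagonal susceptance submatrix `B_{−F}` on the surviving edges. -/
noncomputable def Bminus (B : Fin m → ℝ) (F : Finset (Fin m)) :
    Matrix {e : Fin m // e ∉ F} {e : Fin m // e ∉ F} ℝ :=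
  Matrix.diagonal fun e => B e.val

/-- The diagonal susceptance submatrix `B_F` on the removed edges. -/
noncomputable def Bof (B : Fin m → ℝ) (F : Finset (Fin m)) :
    Matrix {e : Fin m // e ∈ F} {e : Fin m // e ∈ F} ℝ :=
  Matrix.diagonal fun e => B e.val

/-- The post-contingency Laplacian `L_{−F} = C_{−F} ⬝ B_{−F} ⬝ C_{−F}ᵀ`. -/
noncomputable def lapMinus (src tgt : Fin m → Fin (n + 1)) (B : Fin m → ℝ)
    (F : Finset (Fin m)) : Matrix (Fin (n + 1)) (Fin (n + 1)) ℝ :=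
  Cminus src tgt F * Bminus B F * (Cminus src tgt F)ᵀ

/-- The padded inverse `A_{−F}` of the post-contingency reduced Laplacian. -/
noncomputable def AmatMinus (src tgt : Fin m → Fin (n + 1)) (B : Fin m → ℝ)
    (F : Finset (Fin m)) : Matrix (Fin (n + 1)) (Fin (n + 1)) ℝ :=
  Matrix.of fun i j =>
    if hi : i = Fin.last n then 0
    else if hj : j = Fin.last n then 0
    else ((lapMinus src tgt B F).submatrix Fin.castSucc Fin.castSucc)⁻¹
      (i.castPred hi) (j.castPred hj)

/-- The pre-contingency branch flow vector `f = diag(B) ⬝ Cᵀ ⬝ A ⬝ p`. -/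
noncomputable def flowPre (src tgt : Fin m → Fin (n + 1)) (B : Fin m → ℝ)
    (p : Fin (n + 1) → ℝ) : Fin m → ℝ :=
  (Matrix.diagonal B * (incMat src tgt)ᵀ * Amat src tgt B) *ᵥ p

/-- The post-contingency branch flow vector `f̃_{−F} = B_{−F} ⬝ C_{−F}ᵀ ⬝ A_{−F} ⬝ p`
on the surviving edges. -/
noncomputable def flowPost (src tgt : Fin m → Fin (n + 1)) (B : Fin m → ℝ)
    (F : Finset (Fin m)) (p : Fin (n + 1) → ℝ) : {e : Fin m // e ∉ F} → ℝ :=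
  (Bminus B F * (Cminus src tgt F)ᵀ * AmatMinus src tgt B F) *ᵥ p

/-- The generalized line outage distribution factor matrix
`K^F = B_{−F} ⬝ C_{−F}ᵀ ⬝ A_{−F} ⬝ C_F`. -/
noncomputable def glodf (src tgt : Fin m → Fin (n + 1)) (B : Fin m → ℝ)
    (F : Finset (Fin m)) : Matrix {e : Fin m // e ∉ F} {e : Fin m // e ∈ F} ℝ :=
  Bminus B F * (Cminus src tgt F)ᵀ * AmatMinus src tgt B F * Cof src tgt F

/-- The PTDF submatrix `D_{FF} = B_F ⬝ C_Fᵀ ⬝ A ⬝ C_F`. -/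
noncomputable def Dff (src tgt : Fin m → Fin (n + 1)) (B : Fin m → ℝ)
    (F : Finset (Fin m)) : Matrix {e : Fin m // e ∈ F} {e : Fin m // e ∈ F} ℝ :=
  Bof B F * (Cof src tgt F)ᵀ * Amat src tgt B * Cof src tgt F

/-- The PTDF submatrix `D_{−FF} = B_{−F} ⬝ C_{−F}ᵀ ⬝ A ⬝ C_F`. -/
noncomputable def DmFF (src tgt : Fin m → Fin (n + 1)) (B : Fin m → ℝ)
    (F : Finset (Fin m)) : Matrix {e : Fin m // e ∉ F} {e : Fin m // e ∈ F} ℝ :=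
  Bminus B F * (Cminus src tgt F)ᵀ * Amat src tgt B * Cof src tgt F

section CycleForestAux

variable {n m : ℕ}

private lemma edgeAdj_symm {src tgt : Fin m → Fin (n + 1)} {S : Finset (Fin m)}
    {a b : Fin (n + 1)} (h : edgeAdj src tgt S a b) : edgeAdj src tgt S b a := by
  obtain ⟨e, he, h⟩ := h
  exact ⟨e, he, h.symm⟩

private lemma edgeAdj_mono {src tgt : Fin m → Fin (n + 1)} {S S' : Finset (Fin m)}
    (hS : S ⊆ S') {a b : Fin (n + 1)} (h : edgeAdj src tgt S a b) :
    edgeAdj src tgt S' a b := by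
  obtain ⟨e, he, h⟩ := h
  exact ⟨e, hS he, h⟩

private lemma stepSymm (src tgt : Fin m → Fin (n + 1)) (F : Finset (Fin m))
    (V : Finset (Fin (n + 1))) :
    Symmetric (fun x y => x ∈ V ∧ y ∈ V ∧ edgeAdj src tgt F x y) :=
  fun _ _ ⟨h1, h2, h3⟩ => ⟨h2, h1, edgeAdj_symm h3⟩

private lemma rtg_mono {α : Type*} {r p : α → α → Prop} {a b : α}
    (hab : Relation.ReflTransGen r a b) (h : ∀ a b, r a b → p a b) :
    Relation.ReflTransGen p a b := by
  induction hab with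
  | refl => exact Relation.ReflTransGen.refl
  | tail _ hs ih => exact ih.tail (h _ _ hs)

private lemma rtg_symmetric {α : Type*} {r : α → α → Prop} (h : Symmetric r) :
    Symmetric (Relation.ReflTransGen r) := by
  haveI : Std.Symm r := ⟨fun a b hab => h hab⟩
  intro a b hab
  exact Std.Symm.symm a b hab

private lemma connWithin_mono {src tgt : Fin m → Fin (n + 1)} {F F' : Finset (Fin m)}
    {V : Finset (Fin (n + 1))} (hF : F ⊆ F') (h : ConnWithin src tgt F V) :
    ConnWithin src tgt F' V := by
  intro a ha b hb
  exact rtg_mono (h a ha b hb) fun x y ⟨h1, h2, h3⟩ => ⟨h1, h2, edgeAdj_mono hF h3⟩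

private lemma connWithin_insert {src tgt : Fin m → Fin (n + 1)} {F : Finset (Fin m)}
    {V : Finset (Fin (n + 1))} {u v : Fin (n + 1)} {e : Fin m}
    (hC : ConnWithin src tgt F V) (hu : u ∈ V)
    (he : (src e = u ∧ tgt e = v) ∨ (src e = v ∧ tgt e = u)) :
    ConnWithin src tgt (insert e F) (insert v V) := by
  classical
  have lift : ∀ a ∈ V, ∀ b ∈ V, Relation.ReflTransGen
      (fun x y => x ∈ insert v V ∧ y ∈ insert v V ∧ edgeAdj src tgt (insert e F) x y) a b := by
    intro a ha b hb
    exact rtg_mono (hC a ha b hb) fun x y ⟨h1, h2, h3⟩ =>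
      ⟨Finset.mem_insert_of_mem h1, Finset.mem_insert_of_mem h2,
        edgeAdj_mono (Finset.subset_insert _ _) h3⟩
  have stepuv : Relation.ReflTransGen
      (fun x y => x ∈ insert v V ∧ y ∈ insert v V ∧ edgeAdj src tgt (insert e F) x y) u v :=
    Relation.ReflTransGen.single
      ⟨Finset.mem_insert_of_mem hu, Finset.mem_insert_self _ _,
        e, Finset.mem_insert_self _ _, he⟩
  have hsym := rtg_symmetric (stepSymm src tgt (insert e F) (insert v V))
  intro a ha b hb
  rcases Finset.mem_insert.mp ha with ha2 | ha2
  · rcases Finset.mem_insert.mp hb with hb2 | hb2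
    · rw [ha2, hb2]
    · rw [ha2]; exact (hsym stepuv).trans (lift u hu b hb2)
  · rcases Finset.mem_insert.mp hb with hb2 | hb2
    · rw [hb2]; exact (lift a ha2 u hu).trans stepuv
    · exact lift a ha2 b hb2

/-- A partial forest: a tree on the vertex set `V` with edge set `F`. -/
private def PF (src tgt : Fin m → Fin (n + 1)) (V : Finset (Fin (n + 1)))
    (F : Finset (Fin m)) : Prop :=
  (∀ e ∈ F, src e ∈ V ∧ tgt e ∈ V) ∧ ConnWithin src tgt F V ∧ F.card + 1 = V.card

private lemma exists_crossing {src tgt : Fin m → Fin (n + 1)}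
    (hconn : ConnectedOn src tgt Finset.univ)
    {S : Finset (Fin (n + 1))} (h1 : S.Nonempty) (h2 : S ≠ Finset.univ) :
    ∃ e u v, u ∈ S ∧ v ∉ S ∧ ((src e = u ∧ tgt e = v) ∨ (src e = v ∧ tgt e = u)) := by
  by_contra hcon
  push_neg at hcon
  obtain ⟨a, ha⟩ := h1
  obtain ⟨b, hb⟩ : ∃ b, b ∉ S := by
    by_contra h; push_neg at h; exact h2 (Finset.eq_univ_iff_forall.mpr h)
  have key : ∀ x y : Fin (n + 1),
      Relation.ReflTransGen (edgeAdj src tgt Finset.univ) x y → x ∈ S → y ∈ S := by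
    intro x y h
    induction h with
    | refl => exact id
    | tail _ hstep ih =>
      intro hx
      have hc := ih hx
      by_contra hy
      obtain ⟨e, _, hor⟩ := hstep
      rcases hor with ⟨hs, ht⟩ | ⟨hs, ht⟩
      · exact (hcon e _ _ hc hy).1 hs ht
      · exact (hcon e _ _ hc hy).2 hs ht
  exact hb (key a b (hconn a b) ha)

private lemma extendPF {src tgt : Fin m → Fin (n + 1)}
    (hconn : ConnectedOn src tgt Finset.univ) :
    ∀ (r : ℕ) (V1 V2 : Finset (Fin (n + 1))) (F1 F2 : Finset (Fin m)),
      (Finset.univ \ (V1 ∪ V2)).card ≤ r →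
      Disjoint V1 V2 → V1.Nonempty → V2.Nonempty →
      PF src tgt V1 F1 → PF src tgt V2 F2 →
      ∃ V1' V2' F1' F2', V1 ⊆ V1' ∧ V2 ⊆ V2' ∧ Disjoint V1' V2' ∧
        V1' ∪ V2' = Finset.univ ∧ PF src tgt V1' F1' ∧ PF src tgt V2' F2' := by
  classical
  intro r
  induction r with
  | zero =>
    intro V1 V2 F1 F2 hcard hd h1 h2 hp1 hp2
    have hempty : Finset.univ \ (V1 ∪ V2) = ∅ := Finset.card_eq_zero.mp (Nat.le_zero.mp hcard)
    have hu : V1 ∪ V2 = Finset.univ := by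
      apply Finset.eq_univ_iff_forall.mpr
      intro x
      by_contra hx
      have : x ∈ Finset.univ \ (V1 ∪ V2) := Finset.mem_sdiff.mpr ⟨Finset.mem_univ _, hx⟩
      simp [hempty] at this
    exact ⟨V1, V2, F1, F2, subset_rfl, subset_rfl, hd, hu, hp1, hp2⟩
  | succ r ih =>
    intro V1 V2 F1 F2 hcard hd h1 h2 hp1 hp2
    by_cases hu : V1 ∪ V2 = Finset.univ
    · exact ⟨V1, V2, F1, F2, subset_rfl, subset_rfl, hd, hu, hp1, hp2⟩
    · obtain ⟨e, u, v, huS, hvS, hor⟩ :=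
        exists_crossing hconn (h1.mono Finset.subset_union_left) hu
      have hvV1 : v ∉ V1 := fun h => hvS (Finset.mem_union_left _ h)
      have hvV2 : v ∉ V2 := fun h => hvS (Finset.mem_union_right _ h)
      have hcard' : ∀ W : Finset (Fin (n + 1)), W = insert v (V1 ∪ V2) →
          (Finset.univ \ W).card ≤ r := by
        intro W hW
        have h1' : Finset.univ \ W = (Finset.univ \ (V1 ∪ V2)).erase v := by
          subst hW
          ext x
          simp only [Finset.mem_sdiff, Finset.mem_erase, Finset.mem_insert, Finset.mem_univ,
            true_and]
          tauto
        have hv : v ∈ Finset.univ \ (V1 ∪ V2) :=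
          Finset.mem_sdiff.mpr ⟨Finset.mem_univ _, hvS⟩
        rw [h1', Finset.card_erase_of_mem hv]
        omega
      rcases Finset.mem_union.mp huS with hu1 | hu1
      · have heF1 : e ∉ F1 := by
          intro h
          rcases hor with ⟨_, h2'⟩ | ⟨h1', _⟩
          · exact hvV1 (h2' ▸ (hp1.1 e h).2)
          · exact hvV1 (h1' ▸ (hp1.1 e h).1)
        have hpf : PF src tgt (insert v V1) (insert e F1) := by
          refine ⟨?_, connWithin_insert hp1.2.1 hu1 hor, ?_⟩
          · intro f hf
            rcases Finset.mem_insert.mp hf with rfl | hf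
            · rcases hor with ⟨h1', h2'⟩ | ⟨h1', h2'⟩ <;>
                simp [h1', h2', Finset.mem_insert, hu1]
            · exact ⟨Finset.mem_insert_of_mem (hp1.1 f hf).1,
                Finset.mem_insert_of_mem (hp1.1 f hf).2⟩
          · rw [Finset.card_insert_of_notMem heF1, Finset.card_insert_of_notMem hvV1]
            have := hp1.2.2
            omega
        obtain ⟨V1', V2', F1', F2', s1, s2, hd', hu', q1, q2⟩ :=
          ih (insert v V1) V2 (insert e F1) F2
            (hcard' _ (by ext x; simp only [Finset.mem_insert, Finset.mem_union]; tauto))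
            (Finset.disjoint_insert_left.mpr ⟨hvV2, hd⟩)
            (h1.mono (Finset.subset_insert _ _)) h2 hpf hp2
        exact ⟨V1', V2', F1', F2', (Finset.subset_insert _ _).trans s1, s2, hd', hu', q1, q2⟩
      · have heF2 : e ∉ F2 := by
          intro h
          rcases hor with ⟨_, h2'⟩ | ⟨h1', _⟩
          · exact hvV2 (h2' ▸ (hp2.1 e h).2)
          · exact hvV2 (h1' ▸ (hp2.1 e h).1)
        have hpf : PF src tgt (insert v V2) (insert e F2) := by
          refine ⟨?_, connWithin_insert hp2.2.1 hu1 hor, ?_⟩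
          · intro f hf
            rcases Finset.mem_insert.mp hf with rfl | hf
            · rcases hor with ⟨h1', h2'⟩ | ⟨h1', h2'⟩ <;>
                simp [h1', h2', Finset.mem_insert, hu1]
            · exact ⟨Finset.mem_insert_of_mem (hp2.1 f hf).1,
                Finset.mem_insert_of_mem (hp2.1 f hf).2⟩
          · rw [Finset.card_insert_of_notMem heF2, Finset.card_insert_of_notMem hvV2]
            have := hp2.2.2
            omega
        obtain ⟨V1', V2', F1', F2', s1, s2, hd', hu', q1, q2⟩ :=
          ih V1 (insert v V2) F1 (insert e F2)
            (hcard' _ (by ext x; simp only [Finset.mem_insert, Finset.mem_union]; tauto))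
            (Finset.disjoint_insert_right.mpr ⟨hvV1, hd⟩)
            h1 (h2.mono (Finset.subset_insert _ _)) hp1 hpf
        exact ⟨V1', V2', F1', F2', s1, (Finset.subset_insert _ _).trans s2, hd', hu', q1, q2⟩

private lemma forest_of_PF {src tgt : Fin m → Fin (n + 1)}
    {V1 V2 : Finset (Fin (n + 1))} {F1 F2 : Finset (Fin m)} {N1 N2 : Finset (Fin (n + 1))}
    (hp1 : PF src tgt V1 F1) (hp2 : PF src tgt V2 F2)
    (hd : Disjoint V1 V2) (hu : V1 ∪ V2 = Finset.univ)
    (hN1 : N1 ⊆ V1) (hN2 : N2 ⊆ V2) :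
    IsSpanningForest2 src tgt (F1 ∪ F2) N1 N2 := by
  classical
  have hdF : Disjoint F1 F2 := Finset.disjoint_left.mpr fun e he1 he2 =>
    Finset.disjoint_left.mp hd (hp1.1 e he1).1 (hp2.1 e he2).1
  have hcardV : V1.card + V2.card = n + 1 := by
    rw [← Finset.card_union_of_disjoint hd, hu, Finset.card_univ, Fintype.card_fin]
  refine ⟨V1, V2, hd, hu, ?_, ?_, hN1, hN2, ?_, ?_, ?_, ?_⟩
  · exact Finset.card_pos.mp (by have := hp1.2.2; omega)
  · exact Finset.card_pos.mp (by have := hp2.2.2; omega)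
  · have h1 := hp1.2.2
    have h2 := hp2.2.2
    rw [Finset.card_union_of_disjoint hdF]
    omega
  · intro e he
    rcases Finset.mem_union.mp he with he | he
    · exact Or.inl (hp1.1 e he)
    · exact Or.inr (hp2.1 e he)
  · exact connWithin_mono Finset.subset_union_left hp1.2.1
  · exact connWithin_mono Finset.subset_union_right hp2.2.1

private lemma all_of_chain' {α : Type*} {R : α → α → Prop} {P : α → Prop}
    (hR : ∀ x y, R x y → P y) :
    ∀ (L : List α) (hL : L ≠ []), L.IsChain R → P (L.head hL) → ∀ x ∈ L, P x := by
  intro L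
  induction L with
  | nil => simp
  | cons a t ih =>
    intro _ hc hhead x hx
    rcases List.mem_cons.mp hx with rfl | hx
    · simpa using hhead
    · cases t with
      | nil => simp at hx
      | cons b t2 =>
        have hc' := List.isChain_cons_cons.mp hc
        exact ih (by simp) hc'.2 (by simpa using hR _ _ hc'.1) x hx

private lemma exists_path_list {src tgt : Fin m → Fin (n + 1)}
    (hsimple : ∀ e, src e ≠ tgt e) {F : Finset (Fin m)} {V : Finset (Fin (n + 1))}
    (hC : ConnWithin src tgt F V) {a b : Fin (n + 1)} (ha : a ∈ V) (hb : b ∈ V) :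
    ∃ L : List (Fin (n + 1)), ∃ hL : L ≠ [],
      L.Nodup ∧ L.head hL = a ∧ L.getLast hL = b ∧ (∀ x ∈ L, x ∈ V) ∧
      ∀ i, (h : i + 1 < L.length) → edgeAdj src tgt F (L[i]'(by omega)) (L[i+1]'h) := by
  classical
  let G : SimpleGraph (Fin (n + 1)) :=
    { Adj := fun x y => x ∈ V ∧ y ∈ V ∧ edgeAdj src tgt F x y ∧ x ≠ y
      symm := ⟨fun x y ⟨h1, h2, h3, h4⟩ => ⟨h2, h1, edgeAdj_symm h3, h4.symm⟩⟩
      loopless := ⟨fun x ⟨_, _, _, h4⟩ => h4 rfl⟩ }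
  have hreach : G.Reachable a b := by
    rw [SimpleGraph.reachable_iff_reflTransGen]
    refine rtg_mono (hC a ha b hb) ?_
    intro x y ⟨h1, h2, h3⟩
    have hxy : x ≠ y := by
      rintro rfl
      obtain ⟨e, _, he⟩ := h3
      rcases he with ⟨hs, ht⟩ | ⟨hs, ht⟩ <;> exact hsimple e (hs.trans ht.symm)
    exact ⟨h1, h2, h3, hxy⟩
  obtain ⟨w⟩ := hreach
  let p := w.bypass
  have hpath := w.bypass_isPath
  have hne : p.support ≠ [] := p.support_ne_nil
  have hchain : List.IsChain G.Adj p.support := p.isChain_adj_support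
  have hhead : p.support.head hne = a := p.head_support
  refine ⟨p.support, hne, hpath.support_nodup, hhead, ?_, ?_, ?_⟩
  · exact p.getLast_support
  · refine all_of_chain' (fun x y hxy => hxy.2.1) p.support hne hchain ?_
    rw [hhead]; exact ha
  · intro i h
    have := List.isChain_iff_getElem.mp hchain i (by omega)
    exact this.2.2.1

private lemma card_filter_Ico {N : ℕ} (a b : ℕ) (hb : b ≤ N) :
    ((Finset.univ : Finset (Fin N)).filter (fun t => a ≤ t.val ∧ t.val < b)).card = b - a := by
  classical
  apply Finset.card_eq_of_bijective (fun i _ => (⟨a + i, by omega⟩ : Fin N))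
  · intro t ht
    simp only [Finset.mem_filter] at ht
    exact ⟨t.val - a, by omega, by apply Fin.ext; show a + (t.val - a) = t.val; omega⟩
  · intro i hi
    simp only [Finset.mem_filter, Finset.mem_univ, true_and]
    constructor
    · show a ≤ a + i; omega
    · show a + i < b; omega
  · intro i j hi hj hij
    have : a + i = a + j := congrArg Fin.val hij
    omega

private lemma vsucc {k : ℕ} {α : Sort*} (vs : Fin (k + 2) → α) (i : ℕ) (hi : i < k + 1) :
    vs ((⟨i, by omega⟩ : Fin (k + 2)) + 1) = vs ⟨i + 1, by omega⟩ := by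
  congr 1
  apply Fin.ext
  rw [Fin.val_add_one, if_neg]
  intro h
  have := congrArg Fin.val h
  rw [Fin.val_last] at this
  simp only at this
  omega

private lemma getElem_idx_congr {α : Type*} (L : List α) (i j : ℕ) (h : i < L.length)
    (hij : i = j) : L[i]'h = L[j]'(hij ▸ h) := by subst hij; rfl

private lemma fin_add_one_eq {k : ℕ} (t : Fin (k + 2)) (ht : t.val < k + 1) :
    t + 1 = ⟨t.val + 1, by omega⟩ := by
  have h' : t ≠ Fin.last (k + 1) := by
    intro h
    rw [h, Fin.val_last] at ht
    omega
  apply Fin.ext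
  rw [Fin.val_add_one, if_neg h']

set_option maxHeartbeats 1000000 in
private lemma build_cycle {src tgt : Fin m → Fin (n + 1)}
    (hsimple : ∀ e, src e ≠ tgt e)
    {F : Finset (Fin m)} {V1 V2 : Finset (Fin (n + 1))} (hd : Disjoint V1 V2)
    (hC1 : ConnWithin src tgt F V1) (hC2 : ConnWithin src tgt F V2)
    {l lhat : Fin m} (hne : l ≠ lhat)
    {a1 b1 a2 b2 : Fin (n + 1)}
    (ha1 : a1 ∈ V1) (hb1 : b1 ∈ V1) (ha2 : a2 ∈ V2) (hb2 : b2 ∈ V2)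
    (hl : (src l = a1 ∧ tgt l = b2) ∨ (src l = b2 ∧ tgt l = a1))
    (hlh : (src lhat = b1 ∧ tgt lhat = a2) ∨ (src lhat = a2 ∧ tgt lhat = b1)) :
    ExistsSimpleCycleThrough src tgt l lhat := by
  classical
  obtain ⟨L1, hL1ne, hL1nd, hL1h, hL1l, hL1mem, hL1adj⟩ := exists_path_list hsimple hC1 ha1 hb1
  obtain ⟨L2, hL2ne, hL2nd, hL2h, hL2l, hL2mem, hL2adj⟩ := exists_path_list hsimple hC2 ha2 hb2
  have hn1 : 1 ≤ L1.length := List.length_pos_iff.mpr hL1ne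
  have hn2 : 1 ≤ L2.length := List.length_pos_iff.mpr hL2ne
  obtain ⟨k, hk⟩ : ∃ k, k + 2 = L1.length + L2.length :=
    ⟨L1.length + L2.length - 2, by omega⟩
  have hlen : (L1 ++ L2).length = k + 2 := by
    rw [List.length_append]; omega
  obtain ⟨vs, hvseq⟩ : ∃ vs : Fin (k + 2) → Fin (n + 1),
      ∀ t : Fin (k + 2), vs t = (L1 ++ L2)[t.val]'(by rw [hlen]; exact t.isLt) :=
    ⟨fun t => (L1 ++ L2)[t.val]'(by rw [hlen]; exact t.isLt), fun _ => rfl⟩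
  have hLnd : (L1 ++ L2).Nodup := by
    rw [List.nodup_append]
    exact ⟨hL1nd, hL2nd, fun x hx1 y hx2 hxy =>
      Finset.disjoint_left.mp hd (hL1mem x hx1) (hxy ▸ hL2mem y hx2)⟩
  have hvsinj : Function.Injective vs := by
    intro t t' h
    rw [hvseq t, hvseq t'] at h
    have h2 := List.nodup_iff_injective_getElem.mp hLnd
      (a₁ := ⟨t.val, by rw [hlen]; exact t.isLt⟩)
      (a₂ := ⟨t'.val, by rw [hlen]; exact t'.isLt⟩) h
    have h3 := congrArg Fin.val h2
    exact Fin.ext h3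
  have hlo : ∀ (i : ℕ) (hik : i < k + 2) (hin : i < L1.length),
      vs ⟨i, hik⟩ = L1[i]'hin := by
    intro i hik hin
    rw [hvseq]
    exact List.getElem_append_left hin
  have hhi : ∀ (i : ℕ) (hik : i < k + 2) (hin : L1.length ≤ i),
      vs ⟨i, hik⟩ = L2[i - L1.length]'(by omega) := by
    intro i hik hin
    rw [hvseq]
    exact List.getElem_append_right hin
  have hvs0 : vs ⟨0, by omega⟩ = a1 := by
    rw [hlo 0 (by omega) (by omega)]
    rw [← List.head_eq_getElem_zero hL1ne]
    exact hL1h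
  have hvsb1 : vs ⟨L1.length - 1, by omega⟩ = b1 := by
    rw [hlo (L1.length - 1) (by omega) (by omega)]
    rw [← List.getLast_eq_getElem hL1ne]
    exact hL1l
  have hvsa2 : vs ⟨L1.length, by omega⟩ = a2 := by
    rw [hhi L1.length (by omega) le_rfl]
    simp only [Nat.sub_self]
    rw [← List.head_eq_getElem_zero hL2ne]
    exact hL2h
  have hvslast : vs ⟨k + 1, by omega⟩ = b2 := by
    rw [hhi (k + 1) (by omega) (by omega)]
    simp only [show k + 1 - L1.length = L2.length - 1 from by omega]
    rw [← List.getLast_eq_getElem hL2ne]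
    exact hL2l
  let Cond : Fin (k + 2) → Fin m → Prop := fun t e =>
    (src e = vs t ∧ tgt e = vs (t + 1)) ∨ (src e = vs (t + 1) ∧ tgt e = vs t)
  have hc_l : Cond (Fin.last (k + 1)) l := by
    have h1 : vs (Fin.last (k + 1)) = b2 := hvslast
    have h2 : vs (Fin.last (k + 1) + 1) = a1 := by
      rw [Fin.last_add_one]; exact hvs0
    rcases hl with ⟨hs, ht⟩ | ⟨hs, ht⟩
    · exact Or.inr ⟨hs.trans h2.symm, ht.trans h1.symm⟩
    · exact Or.inl ⟨hs.trans h1.symm, ht.trans h2.symm⟩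
  let jpos : Fin (k + 2) := ⟨L1.length - 1, by omega⟩
  have hjk : jpos.val < k + 1 := by
    show L1.length - 1 < k + 1; omega
  have hc_lh : Cond jpos lhat := by
    have h1 : vs jpos = b1 := hvsb1
    have h2 : vs (jpos + 1) = a2 := by
      rw [fin_add_one_eq jpos hjk]
      have e1 : (⟨jpos.val + 1, by omega⟩ : Fin (k + 2)) = ⟨L1.length, by omega⟩ :=
        Fin.ext (show L1.length - 1 + 1 = L1.length by omega)
      rw [e1]; exact hvsa2
    rcases hlh with ⟨hs, ht⟩ | ⟨hs, ht⟩
    · exact Or.inl ⟨hs.trans h1.symm, ht.trans h2.symm⟩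
    · exact Or.inr ⟨hs.trans h2.symm, ht.trans h1.symm⟩
  have hinner : ∀ t : Fin (k + 2), t ≠ Fin.last (k + 1) → t.val ≠ L1.length - 1 →
      ∃ e, Cond t e := by
    intro t h1 h2
    have htk : t.val < k + 1 := by
      have h3 := t.isLt
      rcases Nat.lt_or_ge t.val (k + 1) with h | h
      · exact h
      · exact absurd (Fin.ext (by rw [Fin.val_last]; omega) : t = Fin.last (k + 1)) h1
    by_cases hcase : t.val < L1.length - 1
    · obtain ⟨e, he, hor⟩ := hL1adj t.val (by omega)
      refine ⟨e, ?_⟩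
      have ev1 : vs t = L1[t.val]'(by omega) := hlo t.val t.isLt (by omega)
      have ev2 : vs (t + 1) = L1[t.val + 1]'(by omega) :=
        (vsucc vs t.val htk).trans (hlo (t.val + 1) (by omega) (by omega))
      rcases hor with ⟨hs, ht'⟩ | ⟨hs, ht'⟩
      · exact Or.inl ⟨by rw [ev1]; exact hs, by rw [ev2]; exact ht'⟩
      · exact Or.inr ⟨by rw [ev2]; exact hs, by rw [ev1]; exact ht'⟩
    · have hge : L1.length ≤ t.val := by omega
      obtain ⟨e, he, hor⟩ := hL2adj (t.val - L1.length) (by omega)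
      refine ⟨e, ?_⟩
      have ev1 : vs t = L2[t.val - L1.length]'(by omega) := hhi t.val t.isLt hge
      have ev2 : vs (t + 1) = L2[t.val - L1.length + 1]'(by omega) :=
        ((vsucc vs t.val htk).trans (hhi (t.val + 1) (by omega) (by omega))).trans
          (getElem_idx_congr L2 _ _ _ (by omega))
      rcases hor with ⟨hs, ht'⟩ | ⟨hs, ht'⟩
      · exact Or.inl ⟨by rw [ev1]; exact hs, by rw [ev2]; exact ht'⟩
      · exact Or.inr ⟨by rw [ev2]; exact hs, by rw [ev1]; exact ht'⟩
  have hstepEx : ∀ t : Fin (k + 2), ∃ e, Cond t e ∧ (t = Fin.last (k + 1) → e = l) ∧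
      (t ≠ Fin.last (k + 1) → t.val = L1.length - 1 → e = lhat) := by
    intro t
    by_cases h1 : t = Fin.last (k + 1)
    · subst h1; exact ⟨l, hc_l, fun _ => rfl, fun h _ => absurd rfl h⟩
    · by_cases h2 : t.val = L1.length - 1
      · have ht : t = jpos := Fin.ext h2
        refine ⟨lhat, ?_, fun h => absurd h h1, fun _ _ => rfl⟩
        rw [ht]; exact hc_lh
      · obtain ⟨e, he⟩ := hinner t h1 h2
        exact ⟨e, he, fun h => absurd h h1, fun _ h => absurd h h2⟩
  let es : Fin (k + 2) → Fin m := fun t => Classical.choose (hstepEx t)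
  have hspec : ∀ t, Cond t (es t) ∧ (t = Fin.last (k + 1) → es t = l) ∧
      (t ≠ Fin.last (k + 1) → t.val = L1.length - 1 → es t = lhat) :=
    fun t => Classical.choose_spec (hstepEx t)
  have heslast : es (Fin.last (k + 1)) = l := (hspec _).2.1 rfl
  have hjlast : jpos ≠ Fin.last (k + 1) := by
    apply Fin.ne_of_val_ne
    rw [Fin.val_last]
    show L1.length - 1 ≠ k + 1
    omega
  have hesj : es jpos = lhat := (hspec jpos).2.2 hjlast rfl
  have hesinj : Function.Injective es := by
    intro t t' heq
    by_contra hne'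
    have c : Cond t (es t) := (hspec t).1
    have c' : Cond t' (es t) := by rw [heq]; exact (hspec t').1
    have hpair : (vs t = vs t' ∧ vs (t + 1) = vs (t' + 1)) ∨
        (vs t = vs (t' + 1) ∧ vs (t + 1) = vs t') := by
      rcases c with ⟨cs, ct⟩ | ⟨cs, ct⟩ <;> rcases c' with ⟨cs', ct'⟩ | ⟨cs', ct'⟩
      · exact Or.inl ⟨cs.symm.trans cs', ct.symm.trans ct'⟩
      · exact Or.inr ⟨cs.symm.trans cs', ct.symm.trans ct'⟩
      · exact Or.inr ⟨ct.symm.trans ct', cs.symm.trans cs'⟩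
      · exact Or.inl ⟨ct.symm.trans ct', cs.symm.trans cs'⟩
    rcases hpair with ⟨p1, p2⟩ | ⟨p1, p2⟩
    · exact hne' (hvsinj p1)
    · have e1 : t = t' + 1 := hvsinj p1
      have e2 : t + 1 = t' := hvsinj p2
      have hv1 := congrArg Fin.val e1
      have hv2 := congrArg Fin.val e2
      rw [Fin.val_add_one] at hv1 hv2
      by_cases ht : t = Fin.last (k + 1) <;> by_cases ht' : t' = Fin.last (k + 1)
      · exact hne' (ht.trans ht'.symm)
      · -- t = last, t' not
        rw [if_neg ht'] at hv1
        rw [if_pos ht] at hv2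
        have htv : t.val = k + 1 := by rw [ht, Fin.val_last]
        have hk0 : k = 0 := by omega
        have ht'j : t' = jpos := by
          apply Fin.ext
          show t'.val = L1.length - 1
          omega
        apply hne
        rw [← heslast, ← hesj, ← ht'j, ← ht, heq]
      · -- t' = last, t not
        rw [if_pos ht'] at hv1
        rw [if_neg ht] at hv2
        have htv : t'.val = k + 1 := by rw [ht', Fin.val_last]
        have hk0 : k = 0 := by omega
        have htj : t = jpos := by
          apply Fin.ext
          show t.val = L1.length - 1
          omega
        apply hne
        rw [← heslast, ← hesj, ← htj, ← ht', heq]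
      · rw [if_neg ht'] at hv1
        rw [if_neg ht] at hv2
        omega
  exact ⟨k, es, vs, hesinj, hvsinj, fun t => (hspec t).1,
    ⟨Fin.last (k + 1), heslast⟩, ⟨jpos, hesj⟩⟩

private lemma arcPF {src tgt : Fin m → Fin (n + 1)} {k : ℕ}
    {es : Fin (k + 2) → Fin m} {vs : Fin (k + 2) → Fin (n + 1)}
    (hesI : Function.Injective es) (hvsI : Function.Injective vs)
    (hstep : ∀ t, (src (es t) = vs t ∧ tgt (es t) = vs (t + 1)) ∨
      (src (es t) = vs (t + 1) ∧ tgt (es t) = vs t))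
    (a b : ℕ) (hab : a ≤ b) (hb : b < k + 2) :
    PF src tgt
      ((Finset.univ.filter (fun t : Fin (k + 2) => a ≤ t.val ∧ t.val < b + 1)).image vs)
      ((Finset.univ.filter (fun t : Fin (k + 2) => a ≤ t.val ∧ t.val < b)).image es) := by
  classical
  set A := (Finset.univ.filter (fun t : Fin (k + 2) => a ≤ t.val ∧ t.val < b + 1)).image vs
    with hA
  set FA := (Finset.univ.filter (fun t : Fin (k + 2) => a ≤ t.val ∧ t.val < b)).image es
    with hFA
  have hmemA : ∀ (i : ℕ) (h : i < k + 2), a ≤ i → i ≤ b → vs ⟨i, h⟩ ∈ A := by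
    intro i h h1 h2
    refine Finset.mem_image_of_mem vs (Finset.mem_filter.mpr ⟨Finset.mem_univ _, ?_, ?_⟩)
    · show a ≤ i; omega
    · show i < b + 1; omega
  refine ⟨?_, ?_, ?_⟩
  · intro e he
    obtain ⟨t, ht, rfl⟩ := Finset.mem_image.mp he
    obtain ⟨-, ht1, ht2⟩ := Finset.mem_filter.mp ht
    have hv1 : vs t ∈ A := hmemA t.val t.isLt ht1 (by omega)
    have hv2 : vs (t + 1) ∈ A := by
      rw [show vs (t + 1) = vs ⟨t.val + 1, by omega⟩ from vsucc vs t.val (by omega)]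
      exact hmemA _ _ (by omega) (by omega)
    rcases hstep t with ⟨h1, h2⟩ | ⟨h1, h2⟩
    · exact ⟨by rw [h1]; exact hv1, by rw [h2]; exact hv2⟩
    · exact ⟨by rw [h1]; exact hv2, by rw [h2]; exact hv1⟩
  · intro x hx y hy
    obtain ⟨tx, htx, rfl⟩ := Finset.mem_image.mp hx
    obtain ⟨ty, hty, rfl⟩ := Finset.mem_image.mp hy
    obtain ⟨-, hx1, hx2⟩ := Finset.mem_filter.mp htx
    obtain ⟨-, hy1, hy2⟩ := Finset.mem_filter.mp hty
    have key : ∀ (d i : ℕ) (h1 : a ≤ i) (h2 : i + d ≤ b),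
        Relation.ReflTransGen
          (fun x y => x ∈ A ∧ y ∈ A ∧ edgeAdj src tgt FA x y)
          (vs ⟨i, by omega⟩) (vs ⟨i + d, by omega⟩) := by
      intro d
      induction d with
      | zero => intro i h1 h2; exact Relation.ReflTransGen.refl
      | succ d ih =>
        intro i h1 h2
        refine (ih i h1 (by omega)).tail ?_
        refine ⟨hmemA _ _ (by omega) (by omega), hmemA _ _ (by omega) (by omega), ?_⟩
        refine ⟨es ⟨i + d, by omega⟩, Finset.mem_image_of_mem es
          (Finset.mem_filter.mpr ⟨Finset.mem_univ _, by
            constructor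
            · show a ≤ i + d; omega
            · show i + d < b; omega⟩), ?_⟩
        have hst := hstep ⟨i + d, by omega⟩
        rw [show vs ((⟨i + d, by omega⟩ : Fin (k + 2)) + 1) = vs ⟨i + d + 1, by omega⟩
          from vsucc vs (i + d) (by omega)] at hst
        exact hst
    rcases le_or_gt tx.val ty.val with hle | hlt
    · have hkey := key (ty.val - tx.val) tx.val hx1 (by omega)
      have he1 : (⟨tx.val, by omega⟩ : Fin (k + 2)) = tx := Fin.ext rfl
      have he2 : (⟨tx.val + (ty.val - tx.val), by omega⟩ : Fin (k + 2)) = ty :=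
        Fin.ext (show tx.val + (ty.val - tx.val) = ty.val by omega)
      rwa [he1, he2] at hkey
    · have hkey := key (tx.val - ty.val) ty.val hy1 (by omega)
      have he1 : (⟨ty.val, by omega⟩ : Fin (k + 2)) = ty := Fin.ext rfl
      have he2 : (⟨ty.val + (tx.val - ty.val), by omega⟩ : Fin (k + 2)) = tx :=
        Fin.ext (show ty.val + (tx.val - ty.val) = tx.val by omega)
      rw [he1, he2] at hkey
      exact rtg_symmetric (stepSymm src tgt FA A) hkey
  · rw [Finset.card_image_of_injective _ hesI, Finset.card_image_of_injective _ hvsI,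
      card_filter_Ico a b (by omega), card_filter_Ico a (b + 1) (by omega)]
    omega

private lemma pair_subset {x y : Fin (n + 1)} {W : Finset (Fin (n + 1))}
    (hx : x ∈ W) (hy : y ∈ W) : ({x, y} : Finset (Fin (n + 1))) ⊆ W := by
  intro z hz
  rcases Finset.mem_insert.mp hz with rfl | hz
  · exact hx
  · rw [Finset.mem_singleton.mp hz]; exact hy

private lemma forward_main {src tgt : Fin m → Fin (n + 1)}
    (hconn : ConnectedOn src tgt Finset.univ)
    {l lhat : Fin m} (hne : l ≠ lhat)
    {k : ℕ} (es : Fin (k + 2) → Fin m) (vs : Fin (k + 2) → Fin (n + 1))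
    (hesI : Function.Injective es) (hvsI : Function.Injective vs)
    (hstep : ∀ t, (src (es t) = vs t ∧ tgt (es t) = vs (t + 1)) ∨
      (src (es t) = vs (t + 1) ∧ tgt (es t) = vs t))
    (hl : es (Fin.last (k + 1)) = l) (t1 : Fin (k + 2)) (ht1 : es t1 = lhat) :
    (∃ F, IsSpanningForest2 src tgt F {src l, src lhat} {tgt l, tgt lhat}) ∨
      (∃ F, IsSpanningForest2 src tgt F {src l, tgt lhat} {tgt l, src lhat}) := by
  classical
  have ht1last : t1 ≠ Fin.last (k + 1) := by
    intro h
    rw [h, hl] at ht1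
    exact hne ht1
  have hs : t1.val < k + 1 := by
    have h2 := t1.isLt
    rcases Nat.lt_or_ge t1.val (k + 1) with h | h
    · exact h
    · exact absurd (Fin.ext (by rw [Fin.val_last]; omega) : t1 = Fin.last (k + 1)) ht1last
  have hp1 := arcPF hesI hvsI hstep 0 t1.val (Nat.zero_le _) (by omega)
  have hp2 := arcPF hesI hvsI hstep (t1.val + 1) (k + 1) (by omega) (by omega)
  set A := (Finset.univ.filter (fun t : Fin (k + 2) => 0 ≤ t.val ∧ t.val < t1.val + 1)).image vs
    with hA
  set FA := (Finset.univ.filter (fun t : Fin (k + 2) => 0 ≤ t.val ∧ t.val < t1.val)).image es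
    with hFA
  set B := (Finset.univ.filter
    (fun t : Fin (k + 2) => t1.val + 1 ≤ t.val ∧ t.val < k + 1 + 1)).image vs with hB
  set FB := (Finset.univ.filter
    (fun t : Fin (k + 2) => t1.val + 1 ≤ t.val ∧ t.val < k + 1)).image es with hFB
  have hmem : ∀ (i : ℕ) (h : i < k + 2) (lo hi : ℕ), lo ≤ i → i < hi →
      vs ⟨i, h⟩ ∈ (Finset.univ.filter
        (fun t : Fin (k + 2) => lo ≤ t.val ∧ t.val < hi)).image vs := by
    intro i h lo hi h1 h2
    exact Finset.mem_image_of_mem vs (Finset.mem_filter.mpr ⟨Finset.mem_univ _, h1, h2⟩)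
  have h0A : vs 0 ∈ A := by
    rw [hA]
    exact hmem 0 (by omega) 0 (t1.val + 1) (by omega) (by omega)
  have ht1A : vs t1 ∈ A := by
    rw [hA]
    exact hmem t1.val t1.isLt 0 (t1.val + 1) (by omega) (by omega)
  have hlastB : vs (Fin.last (k + 1)) ∈ B := by
    rw [hB]
    exact hmem (k + 1) (by omega) (t1.val + 1) (k + 1 + 1) (by omega) (by omega)
  have ht1'B : vs (t1 + 1) ∈ B := by
    rw [show vs (t1 + 1) = vs ⟨t1.val + 1, by omega⟩ from vsucc vs t1.val hs, hB]
    exact hmem (t1.val + 1) (by omega) (t1.val + 1) (k + 1 + 1) le_rfl (by omega)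
  have hdAB : Disjoint A B := by
    rw [Finset.disjoint_left]
    intro x hxA hxB
    obtain ⟨t, ht, rfl⟩ := Finset.mem_image.mp hxA
    obtain ⟨t', ht', heq⟩ := Finset.mem_image.mp hxB
    obtain ⟨-, -, h1⟩ := Finset.mem_filter.mp ht
    obtain ⟨-, h2, -⟩ := Finset.mem_filter.mp ht'
    have h3 := hvsI heq
    have h4 := congrArg Fin.val h3
    omega
  obtain ⟨V1', V2', F1', F2', sA, sB, hd', hu', q1, q2⟩ :=
    extendPF hconn (Finset.univ \ (A ∪ B)).card A B FA FB le_rfl hdAB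
      ⟨vs 0, h0A⟩ ⟨vs (t1 + 1), ht1'B⟩ hp1 hp2
  have hls := hstep (Fin.last (k + 1))
  rw [hl, Fin.last_add_one] at hls
  have hlhs := hstep t1
  rw [ht1] at hlhs
  have m0 : vs 0 ∈ V1' := sA h0A
  have mt1 : vs t1 ∈ V1' := sA ht1A
  have mlast : vs (Fin.last (k + 1)) ∈ V2' := sB hlastB
  have mt1' : vs (t1 + 1) ∈ V2' := sB ht1'B
  have huComm : V2' ∪ V1' = Finset.univ := by rw [Finset.union_comm]; exact hu'
  rcases hls with ⟨e1, e2⟩ | ⟨e1, e2⟩ <;> rcases hlhs with ⟨f1, f2⟩ | ⟨f1, f2⟩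
  · -- src l ∈ B-side, tgt l ∈ A-side, src lhat ∈ A-side, tgt lhat ∈ B-side
    exact Or.inr ⟨F2' ∪ F1', forest_of_PF q2 q1 hd'.symm huComm
      (pair_subset (by rw [e1]; exact mlast) (by rw [f2]; exact mt1'))
      (pair_subset (by rw [e2]; exact m0) (by rw [f1]; exact mt1))⟩
  · -- src l ∈ B, tgt l ∈ A, src lhat ∈ B, tgt lhat ∈ A
    exact Or.inl ⟨F2' ∪ F1', forest_of_PF q2 q1 hd'.symm huComm
      (pair_subset (by rw [e1]; exact mlast) (by rw [f1]; exact mt1'))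
      (pair_subset (by rw [e2]; exact m0) (by rw [f2]; exact mt1))⟩
  · -- src l ∈ A, tgt l ∈ B, src lhat ∈ A, tgt lhat ∈ B
    exact Or.inl ⟨F1' ∪ F2', forest_of_PF q1 q2 hd' hu'
      (pair_subset (by rw [e1]; exact m0) (by rw [f1]; exact mt1))
      (pair_subset (by rw [e2]; exact mlast) (by rw [f2]; exact mt1'))⟩
  · -- src l ∈ A, tgt l ∈ B, src lhat ∈ B, tgt lhat ∈ A
    exact Or.inr ⟨F1' ∪ F2', forest_of_PF q1 q2 hd' hu'
      (pair_subset (by rw [e1]; exact m0) (by rw [f2]; exact mt1))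
      (pair_subset (by rw [e2]; exact mlast) (by rw [f1]; exact mt1'))⟩

end CycleForestAux

/-- **Simple cycles and connecting forests.**
For distinct edges `l = (i, j)` and `ℓ̂ = (î, ĵ)` of a connected graph, there is a simple
cycle containing both edges if and only if at least one of the two-tree spanning forest
families `T({i,î},{j,ĵ})`, `T({i,ĵ},{j,î})` is nonempty. -/
theorem simple_cycle_iff_connecting_forest
    (src tgt : Fin m → Fin (n + 1))
    (hsimple : ∀ e, src e ≠ tgt e)
    (hconn : ConnectedOn src tgt Finset.univ)
    (l lhat : Fin m) (hne : l ≠ lhat) :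
    ExistsSimpleCycleThrough src tgt l lhat ↔
      ((∃ F, IsSpanningForest2 src tgt F {src l, src lhat} {tgt l, tgt lhat})
        ∨ (∃ F, IsSpanningForest2 src tgt F {src l, tgt lhat} {tgt l, src lhat})) := by
  constructor
  · rintro ⟨k, es, vs, hesI, hvsI, hstep, ⟨t0, ht0⟩, ⟨t1, ht1⟩⟩
    refine forward_main hconn hne (fun t => es (t + (t0 + 1))) (fun t => vs (t + (t0 + 1)))
      (hesI.comp (add_left_injective (t0 + 1))) (hvsI.comp (add_left_injective (t0 + 1)))
      ?_ ?_ (t1 - (t0 + 1)) ?_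
    · intro t
      have h := hstep (t + (t0 + 1))
      rw [show t + (t0 + 1) + 1 = (t + 1) + (t0 + 1) from add_right_comm t (t0 + 1) 1] at h
      exact h
    · show es (Fin.last (k + 1) + (t0 + 1)) = l
      rw [show Fin.last (k + 1) + (t0 + 1) = t0 from by
        rw [show t0 + 1 = 1 + t0 from add_comm t0 1, ← add_assoc, Fin.last_add_one, zero_add]]
      exact ht0
    · show es (t1 - (t0 + 1) + (t0 + 1)) = lhat
      rw [sub_add_cancel]
      exact ht1
  · rintro (⟨F, hF⟩ | ⟨F, hF⟩)
    · obtain ⟨V1, V2, hd, hu, h1, h2, hN1, hN2, hcard, hE, hC1, hC2⟩ := hF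
      exact build_cycle (a1 := src l) (b1 := src lhat) (a2 := tgt lhat) (b2 := tgt l)
        hsimple hd hC1 hC2 hne
        (hN1 (Finset.mem_insert_self _ _)) (hN1 (by simp))
        (hN2 (by simp)) (hN2 (Finset.mem_insert_self _ _))
        (Or.inl ⟨rfl, rfl⟩) (Or.inl ⟨rfl, rfl⟩)
    · obtain ⟨V1, V2, hd, hu, h1, h2, hN1, hN2, hcard, hE, hC1, hC2⟩ := hF
      exact build_cycle (a1 := src l) (b1 := tgt lhat) (a2 := src lhat) (b2 := tgt l)
        hsimple hd hC1 hC2 hne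
        (hN1 (Finset.mem_insert_self _ _)) (hN1 (by simp))
        (hN2 (by simp)) (hN2 (Finset.mem_insert_self _ _))
        (Or.inl ⟨rfl, rfl⟩) (Or.inr ⟨rfl, rfl⟩)
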